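/- Let R be a ring, n ≥ 2, p a multilinear polynomial over Z(R), and suppose D = p(B₁,…,B_m) is a diagonal matrix Σᵢ aᵢe_{ii} in Mₙ(R), and suppose conjugating all arguments by Iₙ + e_{1j} (for each j ≥ 2) again yields a diagonal matrix. Then (Iₙ + e_{1j}) D (Iₙ + e_{1j})⁻¹ = D + (a_j − a₁)e_{1j}, hence a₁ = a_j for all j, i.e., D is a scalar matrix. -/

import Mathlib

private theorem key_17 (R : Type*) [Ring R] (n : ℕ) [NeZero n] (d : Fin n → R) (j : Fin n)
    (hj : j ≠ 0) :
    (1 + Matrix.single (0 : Fin n) j (1 : R)) * Matrix.diagonal d *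
        (1 - Matrix.single (0 : Fin n) j (1 : R)) =
      Matrix.diagonal d + Matrix.single (0 : Fin n) j (d j - d 0) := by
  have h1 : Matrix.single (0 : Fin n) j (1 : R) * Matrix.diagonal d =
      Matrix.single (0 : Fin n) j (d j) := by
    ext i k
    by_cases hi : i = 0
    · subst hi
      by_cases hk : k = j
      · subst hk; simp [Matrix.mul_apply, Matrix.single, Matrix.diagonal_apply]
      · simp [Matrix.mul_apply, Matrix.single, Matrix.diagonal_apply, Ne.symm hk,
          fun h : j = k => hk h.symm]
    · rw [Matrix.single_mul_apply_of_ne _ _ _ _ _ hi,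
        Matrix.single_apply_of_ne _ _ _ _ _ (by tauto)]
  have h2 : Matrix.diagonal d * Matrix.single (0 : Fin n) j (1 : R) =
      Matrix.single (0 : Fin n) j (d 0) := by
    ext i k
    by_cases hk : k = j
    · subst hk
      by_cases hi : i = 0
      · subst hi; simp [Matrix.mul_apply, Matrix.single, Matrix.diagonal_apply]
      · simp [Matrix.diagonal_apply, Matrix.single, Ne.symm hi, hi]
    · rw [Matrix.mul_single_apply_of_ne _ _ _ _ _ hk,
        Matrix.single_apply_of_ne _ _ _ _ _ (by tauto)]
  have h3 : Matrix.single (0 : Fin n) j (d j) * Matrix.single (0 : Fin n) j (1 : R)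
      = 0 := Matrix.single_mul_single_of_ne _ (0 : Fin n) j (0 : Fin n)
        hj _
  have h4 : Matrix.single (0 : Fin n) j (d j - d 0) =
      Matrix.single (0 : Fin n) j (d j) - Matrix.single (0 : Fin n) j (d 0) := by
    ext i k; simp [Matrix.single]; split <;> simp
  rw [add_mul, one_mul, h1, mul_sub, mul_one, add_mul, h2, h3, add_zero, h4]
  abel

/-- for a diagonal matrix `D = diagonal d` in `Mₙ(R)` (`n ≥ 2`),
conjugation by `Iₙ + e_{0j}` (for `j ≠ 0`) satisfies
`(Iₙ + e_{0j}) D (Iₙ + e_{0j})⁻¹ = D + (d j − d 0) e_{0j}` where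
`(Iₙ + e_{0j})⁻¹ = Iₙ − e_{0j}`; hence if all these conjugates are again diagonal,
then `d j = d 0` for all `j`, i.e. `D` is the scalar matrix `d 0 • Iₙ`. -/
theorem stmt_17 (R : Type*) [Ring R] (n : ℕ) [NeZero n] (hn : 2 ≤ n) (d : Fin n → R) :
    (∀ j : Fin n, j ≠ 0 →
        (1 + Matrix.single (0 : Fin n) j (1 : R)) * Matrix.diagonal d *
            (1 - Matrix.single (0 : Fin n) j (1 : R)) =
          Matrix.diagonal d + Matrix.single (0 : Fin n) j (d j - d 0)) ∧
    ((∀ j : Fin n, j ≠ 0 →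
        ((1 + Matrix.single (0 : Fin n) j (1 : R)) * Matrix.diagonal d *
            (1 - Matrix.single (0 : Fin n) j (1 : R))).IsDiag) →
      (∀ j : Fin n, d j = d 0) ∧
        Matrix.diagonal d = d 0 • (1 : Matrix (Fin n) (Fin n) R)) := by
  refine ⟨fun j hj => key_17 R n d j hj, fun h => ?_⟩
  have hd : ∀ j : Fin n, d j = d 0 := by
    intro j
    by_cases hj : j = 0
    · rw [hj]
    · have := h j hj
      rw [key_17 R n d j hj] at this
      have h0 := this (show (0 : Fin n) ≠ j from (Ne.symm hj))
      simp only [Matrix.add_apply, Matrix.diagonal_apply,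
        Matrix.single_apply_same] at h0
      rw [if_neg (Ne.symm hj), zero_add] at h0
      exact sub_eq_zero.mp h0
  refine ⟨hd, ?_⟩
  ext i k
  by_cases hik : i = k
  · subst hik; simp [Matrix.diagonal_apply, Matrix.one_apply, hd i]
  · simp [Matrix.diagonal_apply, Matrix.one_apply, hik]
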